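/- arXiv:1805.07248 — 3 statements merged into one kernel-verified Lean document; each statement's English description precedes it below -/
import Mathlib

section
/- Let f₁, f₂ : ℝ → ℝ be C² and h > 0. Define the four successive Euler steps with step size √h: x₁ = x₀ + √h f₁(x₀), x₂ = x₁ + √h f₂(x₁), x₃ = x₂ − √h f₁(x₂), x₄ = x₃ − √h f₂(x₃). Then there exist constants K, h̄ > 0 (depending on bounds of f₁, f₂ and their first and second derivatives on a compact neighborhood of x₀) such that for all h ∈ (0, h̄): |x₄ − x₀ − h(f₁(x₀)f₂′(x₀) − f₂(x₀)f₁′(x₀) − f₁(x₀)f₁′(x₀) − f₂(x₀)f₂′(x₀))| ≤ K h^{3/2}. -/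
open Set

lemma aux_lip (f : ℝ → ℝ) (hf : Differentiable ℝ f) {M : ℝ} {s : Set ℝ} (hs : Convex ℝ s)
    (hM : ∀ t ∈ s, |deriv f t| ≤ M) {x y : ℝ} (hx : x ∈ s) (hy : y ∈ s) :
    |f y - f x| ≤ M * |y - x| := by
  have := hs.norm_image_sub_le_of_norm_deriv_le (f := f)
    (fun t _ => (hf t)) (fun t ht => by simpa using hM t ht) hx hy
  simpa using this

lemma aux_taylor (f : ℝ → ℝ) (hf1 : Differentiable ℝ f) (hf2 : Differentiable ℝ (deriv f))
    {M lo hi : ℝ} (hM : ∀ t ∈ Icc lo hi, |deriv (deriv f) t| ≤ M)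
    {x₀ y : ℝ} (hx : x₀ ∈ Icc lo hi) (hy : y ∈ Icc lo hi) :
    |f y - f x₀ - deriv f x₀ * (y - x₀)| ≤ M * (y - x₀)^2 := by
  set c := deriv f x₀ with hc
  have hsub : uIcc x₀ y ⊆ Icc lo hi := uIcc_subset_Icc hx hy
  have key : ∀ t ∈ uIcc x₀ y, |deriv f t - c| ≤ M * |y - x₀| := by
    intro t ht
    have h1 : |deriv f t - c| ≤ M * |t - x₀| :=
      aux_lip (deriv f) hf2 (convex_uIcc _ _) (fun u hu => hM u (hsub hu))
        left_mem_uIcc ht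
    have h2 : |t - x₀| ≤ |y - x₀| := by
      rw [abs_le]
      rcases Set.mem_uIcc.mp ht with ⟨h3, h4⟩ | ⟨h3, h4⟩ <;>
        constructor <;> linarith [le_abs_self (y - x₀), neg_abs_le (y - x₀)]
    have hM0 : 0 ≤ M := le_trans (abs_nonneg _) (hM x₀ hx)
    calc |deriv f t - c| ≤ M * |t - x₀| := h1
      _ ≤ M * |y - x₀| := by nlinarith
  set g : ℝ → ℝ := fun t => f t - c * t with hg
  have hgd : ∀ t, HasDerivAt g (deriv f t - c) t := by
    intro t
    exact ((hf1 t).hasDerivAt.sub ((hasDerivAt_id t).const_mul c)).congr_deriv (by simp)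
  have : |g y - g x₀| ≤ (M * |y - x₀|) * |y - x₀| := by
    have := (convex_uIcc x₀ y).norm_image_sub_le_of_norm_deriv_le (f := g)
      (fun t _ => (hgd t).differentiableAt)
      (fun t ht => by rw [(hgd t).deriv]; simpa using key t ht)
      left_mem_uIcc right_mem_uIcc
    simpa using this
  have heq : f y - f x₀ - c * (y - x₀) = g y - g x₀ := by simp [hg]; ring
  rw [heq]
  calc |g y - g x₀| ≤ M * |y - x₀| * |y - x₀| := this
    _ = M * (y - x₀)^2 := by rw [mul_assoc, ← abs_mul, abs_mul_self, sq]

set_option maxHeartbeats 2000000 in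
theorem stmt_3 (f₁ f₂ : ℝ → ℝ) (hf₁ : ContDiff ℝ 2 f₁) (hf₂ : ContDiff ℝ 2 f₂) (x₀ : ℝ) :
    ∃ K h' : ℝ, 0 < K ∧ 0 < h' ∧ ∀ h : ℝ, 0 < h → h < h' →
      let s := Real.sqrt h
      let x₁ := x₀ + s * f₁ x₀
      let x₂ := x₁ + s * f₂ x₁
      let x₃ := x₂ - s * f₁ x₂
      let x₄ := x₃ - s * f₂ x₃
      |x₄ - x₀ - h * (f₁ x₀ * deriv f₂ x₀ - f₂ x₀ * deriv f₁ x₀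
          - f₁ x₀ * deriv f₁ x₀ - f₂ x₀ * deriv f₂ x₀)| ≤ K * h ^ ((3:ℝ)/2) := by
  -- differentiability facts
  have hd₁ : Differentiable ℝ f₁ := hf₁.differentiable (by norm_num)
  have hd₂ : Differentiable ℝ f₂ := hf₂.differentiable (by norm_num)
  have hc₁ : ContDiff ℝ 1 (deriv f₁) := ((contDiff_succ_iff_deriv (n := 1)).mp
    (by exact_mod_cast hf₁)).2.2
  have hc₂ : ContDiff ℝ 1 (deriv f₂) := ((contDiff_succ_iff_deriv (n := 1)).mp
    (by exact_mod_cast hf₂)).2.2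
  have hdd₁ : Differentiable ℝ (deriv f₁) := hc₁.differentiable one_ne_zero
  have hdd₂ : Differentiable ℝ (deriv f₂) := hc₂.differentiable one_ne_zero
  have hcdd₁ : Continuous (deriv (deriv f₁)) := hc₁.continuous_deriv le_rfl
  have hcdd₂ : Continuous (deriv (deriv f₂)) := hc₂.continuous_deriv le_rfl
  -- bounds on the compact interval
  set I : Set ℝ := Icc (x₀ - 1) (x₀ + 1) with hI
  obtain ⟨C₁, hC₁⟩ := isCompact_Icc.exists_bound_of_continuousOn
    (f := f₁) hd₁.continuous.continuousOn
  obtain ⟨C₂, hC₂⟩ := isCompact_Icc.exists_bound_of_continuousOn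
    (f := f₂) hd₂.continuous.continuousOn
  obtain ⟨C₃, hC₃⟩ := isCompact_Icc.exists_bound_of_continuousOn
    (f := deriv f₁) hdd₁.continuous.continuousOn
  obtain ⟨C₄, hC₄⟩ := isCompact_Icc.exists_bound_of_continuousOn
    (f := deriv f₂) hdd₂.continuous.continuousOn
  obtain ⟨C₅, hC₅⟩ := isCompact_Icc.exists_bound_of_continuousOn
    (f := deriv (deriv f₁)) hcdd₁.continuousOn
  obtain ⟨C₆, hC₆⟩ := isCompact_Icc.exists_bound_of_continuousOn
    (f := deriv (deriv f₂)) hcdd₂.continuousOn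
  set M : ℝ := max 1 (max C₁ (max C₂ (max C₃ (max C₄ (max C₅ C₆))))) with hM
  have hM1 : (1:ℝ) ≤ M := le_max_left _ _
  have hM0 : (0:ℝ) ≤ M := by linarith
  have hbf₁ : ∀ t ∈ I, |f₁ t| ≤ M := fun t ht => le_trans (by simpa using hC₁ t ht)
    (le_trans (le_max_left _ _) (le_max_right _ _))
  have hbf₂ : ∀ t ∈ I, |f₂ t| ≤ M := fun t ht => le_trans (by simpa using hC₂ t ht)
    (le_trans (le_trans (le_max_left _ _) (le_max_right _ _)) (le_max_right _ _))
  have hbd₁ : ∀ t ∈ I, |deriv f₁ t| ≤ M := fun t ht => le_trans (by simpa using hC₃ t ht)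
    (by simp [hM])
  have hbd₂ : ∀ t ∈ I, |deriv f₂ t| ≤ M := fun t ht => le_trans (by simpa using hC₄ t ht)
    (by simp [hM])
  have hbdd₁ : ∀ t ∈ I, |deriv (deriv f₁) t| ≤ M := fun t ht =>
    le_trans (by simpa using hC₅ t ht) (by simp [hM])
  have hbdd₂ : ∀ t ∈ I, |deriv (deriv f₂) t| ≤ M := fun t ht =>
    le_trans (by simpa using hC₆ t ht) (by simp [hM])
  have hx₀ : x₀ ∈ I := by simp [hI]
  clear_value M
  clear hC₁ hC₂ hC₃ hC₄ hC₅ hC₆ hM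
  refine ⟨18 * M^3, min 1 (1/(9*M^2)), by positivity, by positivity, ?_⟩
  intro h h0 hh
  dsimp only
  set s := Real.sqrt h with hsdef
  have hs0 : 0 ≤ s := Real.sqrt_nonneg h
  have hh2 : h = s^2 := (Real.sq_sqrt h0.le).symm
  have hhs : s * M ≤ 1/3 := by
    have h1 : h < 1/(9*M^2) := lt_of_lt_of_le hh (min_le_right _ _)
    have h2 : (s*M)^2 ≤ 1/9 := by
      have h3 : h * (9*M^2) < 1 := (lt_div_iff₀ (by positivity)).mp h1
      nlinarith
    nlinarith [mul_nonneg hs0 hM0]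
  set X₁ := x₀ + s * f₁ x₀ with hX1
  set X₂ := X₁ + s * f₂ X₁ with hX2
  set X₃ := X₂ - s * f₁ X₂ with hX3
  -- containment estimates
  have e1 : |X₁ - x₀| ≤ s * M := by
    rw [show X₁ - x₀ = s * f₁ x₀ by rw [hX1]; ring, abs_mul, abs_of_nonneg hs0]
    exact mul_le_mul_of_nonneg_left (hbf₁ x₀ hx₀) hs0
  have mem₁ : X₁ ∈ I := by
    have := abs_le.mp e1
    simp only [hI, Set.mem_Icc]; constructor <;> linarith [this.1, this.2]
  have e2 : |X₂ - x₀| ≤ 2 * (s * M) := by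
    rw [show X₂ - x₀ = (X₁ - x₀) + s * f₂ X₁ by rw [hX2]; ring]
    refine le_trans (abs_add_le _ _) ?_
    rw [abs_mul, abs_of_nonneg hs0]
    have := mul_le_mul_of_nonneg_left (hbf₂ X₁ mem₁) hs0
    linarith
  have mem₂ : X₂ ∈ I := by
    have := abs_le.mp e2
    simp only [hI, Set.mem_Icc]; constructor <;> linarith [this.1, this.2]
  have e3 : |X₃ - x₀| ≤ 3 * (s * M) := by
    rw [show X₃ - x₀ = (X₂ - x₀) - s * f₁ X₂ by rw [hX3]; ring]
    refine le_trans (abs_sub _ _) ?_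
    rw [abs_mul, abs_of_nonneg hs0]
    have := mul_le_mul_of_nonneg_left (hbf₁ X₂ mem₂) hs0
    linarith
  have mem₃ : X₃ ∈ I := by
    have := abs_le.mp e3
    simp only [hI, Set.mem_Icc]; constructor <;> linarith [this.1, this.2]
  -- Taylor estimates
  have hE1 := aux_taylor f₂ hd₂ hdd₂ hbdd₂ hx₀ mem₁
  have hE2 := aux_taylor f₁ hd₁ hdd₁ hbdd₁ hx₀ mem₂
  have hE3 := aux_taylor f₂ hd₂ hdd₂ hbdd₂ hx₀ mem₃
  have hD1 := aux_lip f₂ hd₂ (convex_Icc _ _) hbd₂ hx₀ mem₁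
  have hD2 := aux_lip f₁ hd₁ (convex_Icc _ _) hbd₁ hx₀ mem₂
  have hE1b : |f₂ X₁ - f₂ x₀ - deriv f₂ x₀ * (X₁ - x₀)| ≤ M^3 * s^2 := by
    nlinarith [hE1, mul_self_le_mul_self (abs_nonneg (X₁ - x₀)) e1, sq_abs (X₁ - x₀)]
  have hE2b : |f₁ X₂ - f₁ x₀ - deriv f₁ x₀ * (X₂ - x₀)| ≤ 4 * (M^3 * s^2) := by
    nlinarith [hE2, mul_self_le_mul_self (abs_nonneg (X₂ - x₀)) e2, sq_abs (X₂ - x₀)]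
  have hE3b : |f₂ X₃ - f₂ x₀ - deriv f₂ x₀ * (X₃ - x₀)| ≤ 9 * (M^3 * s^2) := by
    nlinarith [hE3, mul_self_le_mul_self (abs_nonneg (X₃ - x₀)) e3, sq_abs (X₃ - x₀)]
  have hD1b : |f₂ X₁ - f₂ x₀| ≤ M^2 * s := by nlinarith [hD1, e1, abs_nonneg (X₁ - x₀)]
  have hD2b : |f₁ X₂ - f₁ x₀| ≤ 2 * (M^2 * s) := by nlinarith [hD2, e2, abs_nonneg (X₂ - x₀)]
  -- the key algebraic identity
  set E₁ := f₂ X₁ - f₂ x₀ - deriv f₂ x₀ * (X₁ - x₀) with hE₁d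
  set E₂ := f₁ X₂ - f₁ x₀ - deriv f₁ x₀ * (X₂ - x₀) with hE₂d
  set E₃ := f₂ X₃ - f₂ x₀ - deriv f₂ x₀ * (X₃ - x₀) with hE₃d
  set D₁ := f₂ X₁ - f₂ x₀ with hD₁d
  set D₂ := f₁ X₂ - f₁ x₀ with hD₂d
  have hid : X₃ - s * f₂ X₃ - x₀ - h * (f₁ x₀ * deriv f₂ x₀ - f₂ x₀ * deriv f₁ x₀
      - f₁ x₀ * deriv f₁ x₀ - f₂ x₀ * deriv f₂ x₀)
      = s * (E₁ - E₂ - E₃) + s^2 * (deriv f₂ x₀ * (D₂ - D₁) - deriv f₁ x₀ * D₁) := by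
    rw [hE₁d, hE₂d, hE₃d, hD₁d, hD₂d, hX3, hX2, hX1, hh2]; ring
  -- norm of h^{3/2}
  have hrs : h ^ ((3:ℝ)/2) = s^3 := by
    have hx : h ^ ((3:ℝ)/2) = (h ^ ((1:ℝ)/2))^(3:ℕ) := by
      rw [← Real.rpow_natCast (h ^ ((1:ℝ)/2)) 3, ← Real.rpow_mul h0.le]; norm_num
    rw [hx, hsdef, Real.sqrt_eq_rpow]
  rw [hid, hrs]
  clear_value s X₁ X₂ X₃ E₁ E₂ E₃ D₁ D₂
  -- combine the estimates
  have hA : |E₁ - E₂ - E₃| ≤ 14 * (M^3 * s^2) := by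
    have h1 : E₁ - E₂ - E₃ ≤ |E₁| + |E₂| + |E₃| := by
      linarith [le_abs_self E₁, neg_abs_le E₂, neg_abs_le E₃]
    have h2 : -(|E₁| + |E₂| + |E₃|) ≤ E₁ - E₂ - E₃ := by
      linarith [neg_abs_le E₁, le_abs_self E₂, le_abs_self E₃]
    rw [abs_le]; constructor <;> [linarith [hE1b, hE2b, hE3b]; linarith [hE1b, hE2b, hE3b]]
  have hDD : |D₂ - D₁| ≤ 3 * (M^2 * s) := by
    rw [abs_le]; constructor <;>
      [linarith [neg_abs_le D₂, le_abs_self D₁, hD1b, hD2b];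
       linarith [le_abs_self D₂, neg_abs_le D₁, hD1b, hD2b]]
  have hb' : |deriv f₂ x₀| ≤ M := hbd₂ x₀ hx₀
  have ha' : |deriv f₁ x₀| ≤ M := hbd₁ x₀ hx₀
  have hB1 : |deriv f₂ x₀ * (D₂ - D₁)| ≤ 3 * (M^3 * s) := by
    rw [abs_mul]
    nlinarith [mul_le_mul hb' hDD (abs_nonneg _) hM0]
  have hB2 : |deriv f₁ x₀ * D₁| ≤ M^3 * s := by
    rw [abs_mul]
    nlinarith [mul_le_mul ha' hD1b (abs_nonneg _) hM0]
  have hB : |deriv f₂ x₀ * (D₂ - D₁) - deriv f₁ x₀ * D₁| ≤ 4 * (M^3 * s) := by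
    rw [abs_le]; constructor <;>
      [linarith [neg_abs_le (deriv f₂ x₀ * (D₂ - D₁)), le_abs_self (deriv f₁ x₀ * D₁), hB1, hB2];
       linarith [le_abs_self (deriv f₂ x₀ * (D₂ - D₁)), neg_abs_le (deriv f₁ x₀ * D₁), hB1, hB2]]
  calc |s * (E₁ - E₂ - E₃) + s^2 * (deriv f₂ x₀ * (D₂ - D₁) - deriv f₁ x₀ * D₁)|
      ≤ |s * (E₁ - E₂ - E₃)| + |s^2 * (deriv f₂ x₀ * (D₂ - D₁) - deriv f₁ x₀ * D₁)| :=
        abs_add_le _ _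
    _ = s * |E₁ - E₂ - E₃| + s^2 * |deriv f₂ x₀ * (D₂ - D₁) - deriv f₁ x₀ * D₁| := by
        rw [abs_mul, abs_mul, abs_of_nonneg hs0, abs_of_nonneg (sq_nonneg s)]
    _ ≤ s * (14 * (M^3 * s^2)) + s^2 * (4 * (M^3 * s)) := by
        exact add_le_add (mul_le_mul_of_nonneg_left hA hs0)
          (mul_le_mul_of_nonneg_left hB (sq_nonneg s))
    _ = 18 * M^3 * s^3 := by ring
end

section
/- Let f₁, f₂ : ℝ → ℝ be C² and h > 0. Define the Heun step H_g^s(x) = x + (s/2)(g(x) + g(x + s g(x))) and the composite x₄ = (H_{−f₂}^{√h} ∘ H_{−f₁}^{√h} ∘ H_{f₂}^{√h} ∘ H_{f₁}^{√h})(x₀). Then there exist K, h̄ > 0 such that for all h ∈ (0, h̄): |x₄ − x₀ − h(f₁(x₀)f₂′(x₀) − f₂(x₀)f₁′(x₀))| ≤ K h^{3/2}, i.e., the Heun composite map approximates a step of length h along the Lie bracket [f₁,f₂](x₀) = f₁(x₀)f₂′(x₀) − f₂(x₀)f₁′(x₀) with error O(h^{3/2}). -/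
lemma lipOn {f f' : ℝ → ℝ} (hf : ∀ t, HasDerivAt f (f' t) t) {M : ℝ} {s : Set ℝ}
    (hs : Convex ℝ s) (hb : ∀ t ∈ s, |f' t| ≤ M) {u v : ℝ} (hu : u ∈ s) (hv : v ∈ s) :
    |f v - f u| ≤ M * |v - u| := by
  have := hs.norm_image_sub_le_of_norm_hasDerivWithin_le
    (fun t ht => (hf t).hasDerivWithinAt) (fun t ht => by simpa using hb t ht) hu hv
  simpa [Real.norm_eq_abs] using this

lemma taylor1 {f f' f'' : ℝ → ℝ} (hf : ∀ t, HasDerivAt f (f' t) t)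
    (hf' : ∀ t, HasDerivAt f' (f'' t) t) {M : ℝ} {s : Set ℝ} (hs : Convex ℝ s)
    (hb : ∀ t ∈ s, |f'' t| ≤ M) (hM : 0 ≤ M) {u v : ℝ} (hu : u ∈ s) (hv : v ∈ s) :
    |f v - f u - f' u * (v - u)| ≤ M * (v - u) ^ 2 := by
  have hsub : Set.uIcc u v ⊆ s := hs.ordConnected.uIcc_subset hu hv
  have hlip : ∀ t ∈ Set.uIcc u v, |f' t - f' u| ≤ M * |v - u| := by
    intro t ht
    have h1 : |f' t - f' u| ≤ M * |t - u| :=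
      lipOn hf' (convex_uIcc u v) (fun r hr => hb r (hsub hr)) Set.left_mem_uIcc ht
    have h2 : |t - u| ≤ |v - u| := by
      rcases Set.mem_uIcc.mp ht with ⟨h3, h4⟩ | ⟨h3, h4⟩ <;>
        · rw [abs_le]
          constructor <;> [nlinarith [le_abs_self (v-u), neg_abs_le (v-u)];
            nlinarith [le_abs_self (v-u), neg_abs_le (v-u)]]
    nlinarith [abs_nonneg (f' t - f' u), abs_nonneg (t - u)]
  have hφ : ∀ t ∈ Set.uIcc u v,
      HasDerivWithinAt (fun r => f r - f' u * r) (f' t - f' u) (Set.uIcc u v) t := by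
    intro t ht
    have h1 : HasDerivAt (fun y => f' u * y) (f' u) t := by
      simpa using (hasDerivAt_id t).const_mul (f' u)
    exact ((hf t).sub h1).hasDerivWithinAt
  have := (convex_uIcc u v).norm_image_sub_le_of_norm_hasDerivWithin_le hφ
    (fun t ht => by simpa using hlip t ht) Set.left_mem_uIcc Set.right_mem_uIcc
  rw [Real.norm_eq_abs, Real.norm_eq_abs] at this
  calc |f v - f u - f' u * (v - u)|
      = |(f v - f' u * v) - (f u - f' u * u)| := by ring_nf
    _ ≤ M * |v - u| * |v - u| := this
    _ = M * |v - u| ^ 2 := by ring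
    _ = M * (v - u) ^ 2 := by rw [sq_abs]

lemma cube_small {s M : ℝ} (hs : 0 < s) (hM : 1 ≤ M) (hsM : M^2 * s ≤ 1/3000) :
    M^3 * s^3 ≤ (M*s)/9000000 ∧ s ≤ 1/3000 ∧ M^2*s^2 ≤ s/3000 ∧ 0 < M := by
  have hM0 : (0:ℝ) < M := by linarith
  have hM2 : 1 ≤ M^2 := by nlinarith
  have hs1 : s ≤ 1/3000 := by
    have := le_mul_of_one_le_left hs.le hM2
    nlinarith
  have hq : M^2*s^2 ≤ s/3000 := by nlinarith [mul_le_mul_of_nonneg_right hsM hs.le]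
  refine ⟨?_, hs1, hq, hM0⟩
  have h3 : M^3*s^3 ≤ (1/3000)*(M*s^2) := by
    have h2 : (0:ℝ) ≤ M*s^2 := by positivity
    nlinarith [mul_le_mul_of_nonneg_right hsM h2]
  have h5 : (M*s)*s ≤ (M*s)*(1/3000) := by
    have : (0:ℝ) ≤ M*s := by positivity
    exact mul_le_mul_of_nonneg_left hs1 this
  nlinarith [mul_pos hM0 hs]

lemma delta_bnd {s M x₀ y c₁ c₂ C : ℝ} (hs : 0 < s) (hM : 1 ≤ M) (hsM : M^2*s ≤ 1/3000)
    (hc₁ : |c₁| ≤ 2*M) (hc₂ : |c₂| ≤ 3*M^2) (hC : 0 ≤ C) (hC2 : C ≤ 2000)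
    (hD : |y - x₀ - (s*c₁ + s^2*c₂)| ≤ C*(M^3*s^3)) : |y - x₀| ≤ 4*M*s := by
  obtain ⟨hcube, hs1, hq, hM0⟩ := cube_small hs hM hsM
  have h1 := abs_le.mp hD
  have hMs : 0 < M*s := by positivity
  have hsMs : s ≤ M*s := le_mul_of_one_le_left hs.le hM
  have hDb : C*(M^3*s^3) ≤ M*s := by
    have h2 : C*(M^3*s^3) ≤ 2000*(M^3*s^3) :=
      mul_le_mul_of_nonneg_right hC2 (by positivity)
    nlinarith
  have hsc₁ : |s*c₁| ≤ 2*M*s := by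
    rw [abs_mul, abs_of_pos hs]
    nlinarith [abs_nonneg c₁]
  have hsc₂ : |s^2*c₂| ≤ M*s := by
    rw [abs_mul, abs_of_pos (pow_pos hs 2)]
    have : s^2 * |c₂| ≤ s^2 * (3*M^2) := mul_le_mul_of_nonneg_left hc₂ (by positivity)
    nlinarith
  have h4 := abs_le.mp hsc₁
  have h5 := abs_le.mp hsc₂
  rw [abs_le]; constructor <;> linarith [h1.1, h1.2, h4.1, h4.2, h5.1, h5.2]

lemma chain {s M x₀ y y' a b c₁ c₂ C C' : ℝ}
    (hs : 0 < s) (hM : 1 ≤ M) (hsM : M^2 * s ≤ 1/3000)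
    (ha : |a| ≤ M) (hb : |b| ≤ M) (hc₂ : |c₂| ≤ 3*M^2)
    (hD : |y - x₀ - (s*c₁ + s^2*c₂)| ≤ C*(M^3*s^3))
    (hE : |y' - (y + s*a + s*b*(y-x₀) + s^2/2*(b*a))| ≤ 100*M^3*s^3)
    (hC : 0 ≤ C) (hC' : 2*C + 110 ≤ C') :
    |y' - x₀ - (s*(c₁+a) + s^2*(c₂ + b*c₁ + a*b/2))| ≤ C'*(M^3*s^3) := by
  obtain ⟨hcube, hs1, hq, hM0⟩ := cube_small hs hM hsM
  set E := y' - (y + s*a + s*b*(y-x₀) + s^2/2*(b*a)) with hEdef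
  set D := y - x₀ - (s*c₁ + s^2*c₂) with hDdef
  have hid : y' - x₀ - (s*(c₁+a) + s^2*(c₂ + b*c₁ + a*b/2)) = E + D*(1+s*b) + s^3*(b*c₂) := by
    rw [hEdef, hDdef]; ring
  rw [hid]
  have hbM : |s*b| ≤ M^2*s := by
    rw [abs_mul, abs_of_pos hs]
    nlinarith [mul_le_mul_of_nonneg_left hb hs.le,
      mul_nonneg (mul_nonneg hs.le (show (0:ℝ) ≤ M - 1 by linarith)) (show (0:ℝ) ≤ M by linarith)]
  have hsb2 := abs_le.mp hbM
  have t0 : |1 + s*b| ≤ 11/10 := by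
    rw [abs_le]; constructor <;> linarith
  have t1 : |D*(1+s*b)| ≤ (C*(M^3*s^3))*(11/10) := by
    rw [abs_mul]
    exact mul_le_mul hD t0 (abs_nonneg _) (by positivity)
  have t2 : |s^3*(b*c₂)| ≤ 3*(M^3*s^3) := by
    rw [abs_mul, abs_mul, abs_of_pos (pow_pos hs 3)]
    have h6 : |b| * |c₂| ≤ M*(3*M^2) := mul_le_mul hb hc₂ (abs_nonneg _) (by linarith)
    have h7 : s^3*(|b| * |c₂|) ≤ s^3*(M*(3*M^2)) :=
      mul_le_mul_of_nonneg_left h6 (pow_pos hs 3).le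
    nlinarith
  have hX : (0:ℝ) ≤ M^3*s^3 := by positivity
  calc |E + D*(1+s*b) + s^3*(b*c₂)| ≤ |E| + |D*(1+s*b)| + |s^3*(b*c₂)| := by
        refine (abs_add_le _ _).trans ?_
        gcongr
        exact abs_add_le _ _
    _ ≤ C'*(M^3*s^3) := by
        nlinarith [mul_nonneg (show (0:ℝ) ≤ C' - 103 - (11/10)*C by linarith) hX]

/-- Heun (trapezoidal) integration step for `ẋ = g(x)` with step size `s`. -/
noncomputable def heunStep (g : ℝ → ℝ) (s x : ℝ) : ℝ := x + s / 2 * (g x + g (x + s * g x))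

set_option maxHeartbeats 1000000 in
lemma heun_est {g g' g'' : ℝ → ℝ} (hg : ∀ t, HasDerivAt g (g' t) t)
    (hg' : ∀ t, HasDerivAt g' (g'' t) t) {x₀ M : ℝ} (hM : 1 ≤ M)
    (hb0 : ∀ t ∈ Set.Icc (x₀-1) (x₀+1), |g t| ≤ M)
    (hb1 : ∀ t ∈ Set.Icc (x₀-1) (x₀+1), |g' t| ≤ M)
    (hb2 : ∀ t ∈ Set.Icc (x₀-1) (x₀+1), |g'' t| ≤ M)
    {s y : ℝ} (hs : 0 < s) (hsM : s * M ≤ 1/10) (hy : |y - x₀| ≤ 4*M*s) :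
    |heunStep g s y - (y + s * g x₀ + s * g' x₀ * (y - x₀) + s^2/2 * (g' x₀ * g x₀))|
      ≤ 100 * M^3 * s^3 := by
  have hM0 : (0:ℝ) < M := by linarith
  have habs := abs_le.mp hy
  have h4Ms : 4*M*s ≤ 2/5 := by nlinarith
  have hyJ : y ∈ Set.Icc (x₀-1) (x₀+1) := by
    constructor <;> nlinarith [habs.1, habs.2]
  have hx₀J : x₀ ∈ Set.Icc (x₀-1) (x₀+1) := by
    constructor <;> nlinarith
  have hgy : |g y| ≤ M := hb0 y hyJ
  have hgyabs := abs_le.mp hgy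
  have hsgy : |s * g y| ≤ 1/10 := by
    rw [abs_mul, abs_of_pos hs]
    nlinarith [abs_nonneg (g y)]
  have hsgyabs := abs_le.mp hsgy
  have hzJ : y + s * g y ∈ Set.Icc (x₀-1) (x₀+1) := by
    constructor <;> nlinarith [habs.1, habs.2, hsgyabs.1, hsgyabs.2]
  have hJconv : Convex ℝ (Set.Icc (x₀-1) (x₀+1)) := convex_Icc _ _
  have T1 : |g (y + s * g y) - g y - g' y * (s * g y)| ≤ M^3 * s^2 := by
    have := taylor1 hg hg' hJconv hb2 hM0.le hyJ hzJ
    simp only [add_sub_cancel_left] at this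
    have hq : (g y)^2 ≤ M^2 := by nlinarith [hgyabs.1, hgyabs.2]
    calc |g (y + s * g y) - g y - g' y * (s * g y)| ≤ M * (s * g y)^2 := this
      _ = M * s^2 * (g y)^2 := by ring
      _ ≤ M * s^2 * M^2 := by
          have : (0:ℝ) ≤ M * s^2 := by positivity
          nlinarith
      _ = M^3 * s^2 := by ring
  have T2 : |g y - g x₀ - g' x₀ * (y - x₀)| ≤ 16 * M^3 * s^2 := by
    have := taylor1 hg hg' hJconv hb2 hM0.le hx₀J hyJ
    have hq : (y - x₀)^2 ≤ 16 * M^2 * s^2 := by nlinarith [habs.1, habs.2]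
    calc |g y - g x₀ - g' x₀ * (y - x₀)| ≤ M * (y - x₀)^2 := this
      _ ≤ M * (16 * M^2 * s^2) := by nlinarith
      _ = 16 * M^3 * s^2 := by ring
  have L1 : |g y - g x₀| ≤ 4 * M^2 * s := by
    have := lipOn hg hJconv hb1 hx₀J hyJ
    nlinarith [abs_nonneg (y - x₀)]
  have L2 : |g' y - g' x₀| ≤ 4 * M^2 * s := by
    have := lipOn hg' hJconv hb2 hx₀J hyJ
    nlinarith [abs_nonneg (y - x₀)]
  have hgx₀ : |g' x₀| ≤ M := hb1 x₀ hx₀J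
  set A := g (y + s * g y) - g y - g' y * (s * g y) with hA
  set B := g y - g x₀ - g' x₀ * (y - x₀) with hB
  set C1 := g y - g x₀ with hC1
  set C2 := g' y - g' x₀ with hC2
  have key : heunStep g s y - (y + s * g x₀ + s * g' x₀ * (y - x₀) + s^2/2 * (g' x₀ * g x₀))
      = s * B + s/2 * A + s^2/2 * (C2 * g y + g' x₀ * C1) := by
    simp only [heunStep, hA, hB, hC1, hC2]; ring
  rw [key]
  have hW : |C2 * g y + g' x₀ * C1| ≤ 8 * M^3 * s := by
    calc |C2 * g y + g' x₀ * C1| ≤ |C2| * |g y| + |g' x₀| * |C1| := by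
          refine (abs_add_le _ _).trans ?_
          rw [abs_mul, abs_mul]
      _ ≤ 8 * M^3 * s := by
          nlinarith [abs_nonneg C2, abs_nonneg C1, abs_nonneg (g y), abs_nonneg (g' x₀)]
  calc |s * B + s/2 * A + s^2/2 * (C2 * g y + g' x₀ * C1)|
      ≤ |s * B| + |s/2 * A| + |s^2/2 * (C2 * g y + g' x₀ * C1)| := by
        refine (abs_add_le _ _).trans ?_
        gcongr
        exact abs_add_le _ _
    _ = s * |B| + s/2 * |A| + s^2/2 * |C2 * g y + g' x₀ * C1| := by
        rw [abs_mul, abs_mul, abs_mul, abs_of_pos hs, abs_of_pos (by linarith : (0:ℝ) < s/2),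
          abs_of_pos (by positivity : (0:ℝ) < s^2/2)]
    _ ≤ 100 * M^3 * s^3 := by
        have e1 : s * |B| ≤ s * (16 * M^3 * s^2) := mul_le_mul_of_nonneg_left T2 hs.le
        have e2 : s/2 * |A| ≤ s/2 * (M^3 * s^2) :=
          mul_le_mul_of_nonneg_left T1 (by linarith)
        have e3 : s^2/2 * |C2 * g y + g' x₀ * C1| ≤ s^2/2 * (8 * M^3 * s) :=
          mul_le_mul_of_nonneg_left hW (by positivity)
        nlinarith [pow_pos hM0 3, pow_pos hs 3]

set_option maxHeartbeats 1000000 in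
theorem stmt_4 (f₁ f₂ : ℝ → ℝ) (hf₁ : ContDiff ℝ 2 f₁) (hf₂ : ContDiff ℝ 2 f₂) (x₀ : ℝ) :
    ∃ K h' : ℝ, 0 < K ∧ 0 < h' ∧ ∀ h : ℝ, 0 < h → h < h' →
      let s := Real.sqrt h
      let x₄ := heunStep (fun x => -f₂ x) s (heunStep (fun x => -f₁ x) s
        (heunStep f₂ s (heunStep f₁ s x₀)))
      |x₄ - x₀ - h * (f₁ x₀ * deriv f₂ x₀ - f₂ x₀ * deriv f₁ x₀)| ≤ K * h ^ ((3:ℝ)/2) := by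
  -- derivatives
  have h2₁ : ContDiff ℝ (1+1) f₁ := by exact_mod_cast hf₁
  have h2₂ : ContDiff ℝ (1+1) f₂ := by exact_mod_cast hf₂
  have h1₁ : ContDiff ℝ 1 (deriv f₁) := (contDiff_succ_iff_deriv.mp h2₁).2.2
  have h1₂ : ContDiff ℝ 1 (deriv f₂) := (contDiff_succ_iff_deriv.mp h2₂).2.2
  have hd₁ : ∀ t, HasDerivAt f₁ (deriv f₁ t) t :=
    fun t => (hf₁.differentiable (by norm_num) t).hasDerivAt
  have hd₂ : ∀ t, HasDerivAt f₂ (deriv f₂ t) t :=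
    fun t => (hf₂.differentiable (by norm_num) t).hasDerivAt
  have hdd₁ : ∀ t, HasDerivAt (deriv f₁) (deriv (deriv f₁) t) t :=
    fun t => (h1₁.differentiable one_ne_zero t).hasDerivAt
  have hdd₂ : ∀ t, HasDerivAt (deriv f₂) (deriv (deriv f₂) t) t :=
    fun t => (h1₂.differentiable one_ne_zero t).hasDerivAt
  -- bounds on the compact interval
  obtain ⟨B1, hB1⟩ := isCompact_Icc.exists_bound_of_continuousOn
    (s := Set.Icc (x₀-1) (x₀+1)) hf₁.continuous.continuousOn
  obtain ⟨B2, hB2⟩ := isCompact_Icc.exists_bound_of_continuousOn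
    (s := Set.Icc (x₀-1) (x₀+1)) h1₁.continuous.continuousOn
  obtain ⟨B3, hB3⟩ := isCompact_Icc.exists_bound_of_continuousOn
    (s := Set.Icc (x₀-1) (x₀+1)) ((contDiff_one_iff_deriv.mp h1₁).2).continuousOn
  obtain ⟨B4, hB4⟩ := isCompact_Icc.exists_bound_of_continuousOn
    (s := Set.Icc (x₀-1) (x₀+1)) hf₂.continuous.continuousOn
  obtain ⟨B5, hB5⟩ := isCompact_Icc.exists_bound_of_continuousOn
    (s := Set.Icc (x₀-1) (x₀+1)) h1₂.continuous.continuousOn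
  obtain ⟨B6, hB6⟩ := isCompact_Icc.exists_bound_of_continuousOn
    (s := Set.Icc (x₀-1) (x₀+1)) ((contDiff_one_iff_deriv.mp h1₂).2).continuousOn
  set M : ℝ := 1 + (|B1| + |B2| + |B3| + |B4| + |B5| + |B6|) with hMdef
  have habs : (0:ℝ) ≤ |B1| + |B2| + |B3| + |B4| + |B5| + |B6| := by positivity
  have hM : 1 ≤ M := by rw [hMdef]; linarith
  have hM0 : (0:ℝ) < M := by linarith
  have hbf₁ : ∀ t ∈ Set.Icc (x₀-1) (x₀+1), |f₁ t| ≤ M := by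
    intro t ht
    have := hB1 t ht
    rw [Real.norm_eq_abs] at this
    rw [hMdef]
    linarith [le_abs_self B1, abs_nonneg B2, abs_nonneg B3, abs_nonneg B4, abs_nonneg B5,
      abs_nonneg B6]
  have hbd₁ : ∀ t ∈ Set.Icc (x₀-1) (x₀+1), |deriv f₁ t| ≤ M := by
    intro t ht
    have := hB2 t ht
    rw [Real.norm_eq_abs] at this
    rw [hMdef]
    linarith [le_abs_self B2, abs_nonneg B1, abs_nonneg B3, abs_nonneg B4, abs_nonneg B5,
      abs_nonneg B6]
  have hbdd₁ : ∀ t ∈ Set.Icc (x₀-1) (x₀+1), |deriv (deriv f₁) t| ≤ M := by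
    intro t ht
    have := hB3 t ht
    rw [Real.norm_eq_abs] at this
    rw [hMdef]
    linarith [le_abs_self B3, abs_nonneg B1, abs_nonneg B2, abs_nonneg B4, abs_nonneg B5,
      abs_nonneg B6]
  have hbf₂ : ∀ t ∈ Set.Icc (x₀-1) (x₀+1), |f₂ t| ≤ M := by
    intro t ht
    have := hB4 t ht
    rw [Real.norm_eq_abs] at this
    rw [hMdef]
    linarith [le_abs_self B4, abs_nonneg B1, abs_nonneg B2, abs_nonneg B3, abs_nonneg B5,
      abs_nonneg B6]
  have hbd₂ : ∀ t ∈ Set.Icc (x₀-1) (x₀+1), |deriv f₂ t| ≤ M := by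
    intro t ht
    have := hB5 t ht
    rw [Real.norm_eq_abs] at this
    rw [hMdef]
    linarith [le_abs_self B5, abs_nonneg B1, abs_nonneg B2, abs_nonneg B3, abs_nonneg B4,
      abs_nonneg B6]
  have hbdd₂ : ∀ t ∈ Set.Icc (x₀-1) (x₀+1), |deriv (deriv f₂) t| ≤ M := by
    intro t ht
    have := hB6 t ht
    rw [Real.norm_eq_abs] at this
    rw [hMdef]
    linarith [le_abs_self B6, abs_nonneg B1, abs_nonneg B2, abs_nonneg B3, abs_nonneg B4,
      abs_nonneg B5]
  clear_value M
  clear hMdef habs hB1 hB2 hB3 hB4 hB5 hB6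
  clear B1 B2 B3 B4 B5 B6
  have hKpos : (0:ℝ) < 3000 * M^3 := by nlinarith [pow_pos hM0 3]
  have hs₀pos : (0:ℝ) < 1/(3000*M^2) := by
    apply div_pos one_pos
    nlinarith [pow_pos hM0 2]
  refine ⟨3000 * M^3, (1/(3000*M^2))^2, hKpos, pow_pos hs₀pos 2, ?_⟩
  intro h h0 hh
  show |heunStep (fun x => -f₂ x) (Real.sqrt h) (heunStep (fun x => -f₁ x) (Real.sqrt h)
      (heunStep f₂ (Real.sqrt h) (heunStep f₁ (Real.sqrt h) x₀))) - x₀ -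
      h * (f₁ x₀ * deriv f₂ x₀ - f₂ x₀ * deriv f₁ x₀)| ≤ 3000 * M^3 * h ^ ((3:ℝ)/2)
  set s : ℝ := Real.sqrt h with hsdef
  have hs : 0 < s := Real.sqrt_pos.mpr h0
  have hs2 : s^2 = h := Real.sq_sqrt h0.le
  clear_value s
  clear hsdef
  have hsM : M^2 * s ≤ 1/3000 := by
    have hslt : s < 1/(3000*M^2) := by
      have h1 : s^2 < (1/(3000*M^2))^2 := by rw [hs2]; exact hh
      nlinarith
    have h2 : M^2 * s ≤ M^2 * (1/(3000*M^2)) :=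
      mul_le_mul_of_nonneg_left hslt.le (by positivity)
    have he : M^2 * (1/(3000*M^2)) = 1/3000 := by
      rw [mul_one_div, div_eq_div_iff (by positivity : (0:ℝ) < 3000*M^2).ne'
        (by norm_num : (3000:ℝ) ≠ 0)]
      ring
    linarith
  have hsM10 : s * M ≤ 1/10 := by
    have h1 : s*M ≤ M^2*s := by
      nlinarith [mul_nonneg (mul_nonneg hs.le (show (0:ℝ) ≤ M - 1 by linarith)) hM0.le]
    linarith
  have hx₀J : x₀ ∈ Set.Icc (x₀-1) (x₀+1) := by constructor <;> linarith
  have ha₁ : |f₁ x₀| ≤ M := hbf₁ x₀ hx₀J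
  have ha₂ : |f₂ x₀| ≤ M := hbf₂ x₀ hx₀J
  have hb₁ : |deriv f₁ x₀| ≤ M := hbd₁ x₀ hx₀J
  have hb₂ : |deriv f₂ x₀| ≤ M := hbd₂ x₀ hx₀J
  have hmul : ∀ u v : ℝ, |u| ≤ M → |v| ≤ M → |u * v| ≤ M^2 := by
    intro u v hu hv
    rw [abs_mul]
    calc |u| * |v| ≤ M * M := mul_le_mul hu hv (abs_nonneg _) (by linarith)
      _ = M^2 := by ring
  have p1 := abs_le.mp (hmul _ _ hb₁ ha₁)
  have p2 := abs_le.mp (hmul _ _ hb₂ ha₁)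
  have p3 := abs_le.mp (hmul _ _ ha₂ hb₂)
  have p4 := abs_le.mp (hmul _ _ hb₁ ha₂)
  have hMsq : (0:ℝ) ≤ M^2 := by positivity
  -- step 1
  have E₁ := heun_est hd₁ hdd₁ hM hbf₁ hbd₁ hbdd₁ hs hsM10
    (show |x₀ - x₀| ≤ 4*M*s by rw [sub_self, abs_zero]; positivity)
  set y₁ : ℝ := heunStep f₁ s x₀ with hy₁def
  have hD₁ : |y₁ - x₀ - (s*(f₁ x₀) + s^2*(deriv f₁ x₀ * f₁ x₀/2))| ≤ 100*(M^3*s^3) := by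
    rw [show y₁ - x₀ - (s*(f₁ x₀) + s^2*(deriv f₁ x₀ * f₁ x₀/2))
        = y₁ - (x₀ + s * f₁ x₀ + s * deriv f₁ x₀ * (x₀ - x₀) + s^2/2 * (deriv f₁ x₀ * f₁ x₀))
        from by ring]
    exact le_of_le_of_eq E₁ (by ring)
  have hc₁a : |f₁ x₀| ≤ 2*M := ha₁.trans (by linarith)
  have hc₂a : |deriv f₁ x₀ * f₁ x₀/2| ≤ 3*M^2 := by
    rw [abs_le]; constructor <;> linarith [p1.1, p1.2, hMsq]
  have hy₁x : |y₁ - x₀| ≤ 4*M*s :=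
    delta_bnd hs hM hsM hc₁a hc₂a (by norm_num) (by norm_num) hD₁
  -- step 2
  have E₂ := heun_est hd₂ hdd₂ hM hbf₂ hbd₂ hbdd₂ hs hsM10 hy₁x
  set y₂ : ℝ := heunStep f₂ s y₁ with hy₂def
  have hD₂ := chain hs hM hsM ha₂ hb₂ hc₂a hD₁
    (show |y₂ - (y₁ + s*(f₂ x₀) + s*(deriv f₂ x₀)*(y₁-x₀) + s^2/2*(deriv f₂ x₀ * f₂ x₀))|
      ≤ 100*M^3*s^3 from le_of_le_of_eq E₂ (by ring_nf))
    (by norm_num) (show 2*100 + 110 ≤ (310:ℝ) by norm_num)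
  have hc₁b : |f₁ x₀ + f₂ x₀| ≤ 2*M := (abs_add_le _ _).trans (by linarith)
  have hc₂b : |deriv f₁ x₀ * f₁ x₀/2 + deriv f₂ x₀ * f₁ x₀ + f₂ x₀ * deriv f₂ x₀/2| ≤ 3*M^2 := by
    rw [abs_le]; constructor <;> nlinarith [p1.1, p1.2, p2.1, p2.2, p3.1, p3.2]
  have hy₂x : |y₂ - x₀| ≤ 4*M*s :=
    delta_bnd hs hM hsM hc₁b hc₂b (by norm_num) (by norm_num) hD₂
  -- step 3
  have E₃ := heun_est (g := fun x => -f₁ x) (g' := fun t => -deriv f₁ t)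
    (g'' := fun t => -deriv (deriv f₁) t) (fun t => (hd₁ t).neg) (fun t => (hdd₁ t).neg) hM
    (fun t ht => by simpa using hbf₁ t ht) (fun t ht => by simpa using hbd₁ t ht)
    (fun t ht => by simpa using hbdd₁ t ht) hs hsM10 hy₂x
  set y₃ : ℝ := heunStep (fun x => -f₁ x) s y₂ with hy₃def
  have ha₁' : |-f₁ x₀| ≤ M := by rwa [abs_neg]
  have hb₁' : |-deriv f₁ x₀| ≤ M := by rwa [abs_neg]
  have hD₃ := chain hs hM hsM ha₁' hb₁' hc₂b hD₂
    (show |y₃ - (y₂ + s*(-f₁ x₀) + s*(-deriv f₁ x₀)*(y₂-x₀) + s^2/2*(-deriv f₁ x₀ * -f₁ x₀))|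
      ≤ 100*M^3*s^3 from le_of_le_of_eq (le_of_eq_of_le (by ring_nf) E₃) (by ring_nf))
    (by norm_num) (show 2*310 + 110 ≤ (730:ℝ) by norm_num)
  have hD₃' : |y₃ - x₀ - (s*(f₂ x₀) +
      s^2*(deriv f₂ x₀ * f₁ x₀ + f₂ x₀ * deriv f₂ x₀/2 - deriv f₁ x₀ * f₂ x₀))|
      ≤ 730*(M^3*s^3) := by
    rw [show y₃ - x₀ - (s*(f₂ x₀) +
        s^2*(deriv f₂ x₀ * f₁ x₀ + f₂ x₀ * deriv f₂ x₀/2 - deriv f₁ x₀ * f₂ x₀))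
      = y₃ - x₀ - (s*(f₁ x₀ + f₂ x₀ + -f₁ x₀) +
        s^2*(deriv f₁ x₀ * f₁ x₀/2 + deriv f₂ x₀ * f₁ x₀ + f₂ x₀ * deriv f₂ x₀/2 +
          -deriv f₁ x₀*(f₁ x₀ + f₂ x₀) + -f₁ x₀ * -deriv f₁ x₀/2)) from by ring]
    exact hD₃
  have hc₁c : |f₂ x₀| ≤ 2*M := ha₂.trans (by linarith)
  have hc₂c : |deriv f₂ x₀ * f₁ x₀ + f₂ x₀ * deriv f₂ x₀/2 - deriv f₁ x₀ * f₂ x₀| ≤ 3*M^2 := by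
    rw [abs_le]; constructor <;> nlinarith [p2.1, p2.2, p3.1, p3.2, p4.1, p4.2]
  have hy₃x : |y₃ - x₀| ≤ 4*M*s :=
    delta_bnd hs hM hsM hc₁c hc₂c (by norm_num) (by norm_num) hD₃'
  -- step 4
  have E₄ := heun_est (g := fun x => -f₂ x) (g' := fun t => -deriv f₂ t)
    (g'' := fun t => -deriv (deriv f₂) t) (fun t => (hd₂ t).neg) (fun t => (hdd₂ t).neg) hM
    (fun t ht => by simpa using hbf₂ t ht) (fun t ht => by simpa using hbd₂ t ht)
    (fun t ht => by simpa using hbdd₂ t ht) hs hsM10 hy₃x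
  set y₄ : ℝ := heunStep (fun x => -f₂ x) s y₃ with hy₄def
  have ha₂' : |-f₂ x₀| ≤ M := by rwa [abs_neg]
  have hb₂' : |-deriv f₂ x₀| ≤ M := by rwa [abs_neg]
  have hD₄ := chain hs hM hsM ha₂' hb₂' hc₂c hD₃'
    (show |y₄ - (y₃ + s*(-f₂ x₀) + s*(-deriv f₂ x₀)*(y₃-x₀) + s^2/2*(-deriv f₂ x₀ * -f₂ x₀))|
      ≤ 100*M^3*s^3 from le_of_le_of_eq (le_of_eq_of_le (by ring_nf) E₄) (by ring_nf))
    (by norm_num) (show 2*730 + 110 ≤ (1570:ℝ) by norm_num)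
  have hD₄' : |y₄ - x₀ - s^2*(f₁ x₀ * deriv f₂ x₀ - f₂ x₀ * deriv f₁ x₀)| ≤ 1570*(M^3*s^3) := by
    rw [show y₄ - x₀ - s^2*(f₁ x₀ * deriv f₂ x₀ - f₂ x₀ * deriv f₁ x₀)
      = y₄ - x₀ - (s*(f₂ x₀ + -f₂ x₀) +
        s^2*(deriv f₂ x₀ * f₁ x₀ + f₂ x₀ * deriv f₂ x₀/2 - deriv f₁ x₀ * f₂ x₀ +
          -deriv f₂ x₀*(f₂ x₀) + -f₂ x₀ * -deriv f₂ x₀/2)) from by ring]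
    exact hD₄
  -- conclude
  have hpow : h ^ ((3:ℝ)/2) = s^3 := by
    rw [← hs2, ← Real.rpow_natCast s 2, ← Real.rpow_mul hs.le]
    norm_num
  rw [hpow, ← hs2]
  calc |y₄ - x₀ - s^2 * (f₁ x₀ * deriv f₂ x₀ - f₂ x₀ * deriv f₁ x₀)| ≤ 1570*(M^3*s^3) := hD₄'
    _ ≤ 3000 * M^3 * s^3 := by nlinarith [mul_pos (pow_pos hM0 3) (pow_pos hs 3)]
end

section
/- Let J : ℝ → ℝ be C² with bounded second derivative on a compact neighborhood of x₀, and set f₁ = sin∘J, f₂ = cos∘J. Let x₄ be the result of the four Euler steps with step √h: x₁ = x₀ + √h f₁(x₀), x₂ = x₁ + √h f₂(x₁), x₃ = x₂ − √h f₁(x₂), x₄ = x₃ − √h f₂(x₃). Then there exist K, h̄ > 0 such that for all h ∈ (0, h̄): |x₄ − (x₀ − h J′(x₀))| ≤ K h^{3/2}. -/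
lemma mvt_abs (f : ℝ → ℝ) (hf : Differentiable ℝ f) {C : ℝ} {s : Set ℝ} (hs : Convex ℝ s)
    (hC : ∀ z ∈ s, |deriv f z| ≤ C) {x y : ℝ} (hx : x ∈ s) (hy : y ∈ s) :
    |f y - f x| ≤ C * |y - x| := by
  have := hs.norm_image_sub_le_of_norm_hasDerivWithin_le (f' := deriv f)
    (fun z hz => (hf z).hasDerivAt.hasDerivWithinAt)
    (fun z hz => by simpa [Real.norm_eq_abs] using hC z hz) hx hy
  simpa [Real.norm_eq_abs] using this

lemma taylor_abs (f : ℝ → ℝ) (hf : Differentiable ℝ f) {L : ℝ} {s : Set ℝ} (hs : Convex ℝ s)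
    {x y : ℝ} (hx : x ∈ s) (hy : y ∈ s) (c : ℝ) (hL : ∀ z ∈ s, |deriv f z - c| ≤ L) :
    |f y - f x - c * (y - x)| ≤ L * |y - x| := by
  have hg : Differentiable ℝ (fun z => f z - c * z) := hf.sub (differentiable_id.const_mul c)
  have hdg : ∀ z : ℝ, deriv (fun z => f z - c * z) z = deriv f z - c := fun z => by
    have := ((hf z).hasDerivAt.sub ((hasDerivAt_id z).const_mul c)).deriv
    exact this.trans (by simp)
  have h := mvt_abs _ hg hs (fun z hz => by rw [hdg]; exact hL z hz) hx hy
  have : f y - c * y - (f x - c * x) = f y - f x - c * (y - x) := by ring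
  rwa [this] at h

lemma taylor2 (f : ℝ → ℝ) (hf : ContDiff ℝ 2 f) {L : ℝ} {s : Set ℝ} (hs : Convex ℝ s)
    (hL : ∀ z ∈ s, |deriv (deriv f) z| ≤ L) {x y : ℝ}
    (hx : x ∈ s) (hy : y ∈ s) :
    |f y - f x - deriv f x * (y - x)| ≤ L * (y - x) ^ 2 := by
  have hf1 : Differentiable ℝ f := hf.differentiable (by norm_num)
  have hf' : ContDiff ℝ (1 + 1) f := by norm_num; exact hf
  have hdf : ContDiff ℝ 1 (deriv f) := (contDiff_succ_iff_deriv.mp hf').2.2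
  have hdf1 : Differentiable ℝ (deriv f) := hdf.differentiable one_ne_zero
  have hsub : Set.uIcc x y ⊆ s := by
    rw [← segment_eq_uIcc]; exact hs.segment_subset hx hy
  have hL0 : 0 ≤ L := le_trans (abs_nonneg _) (hL x hx)
  have key : ∀ z ∈ Set.uIcc x y, |deriv f z - deriv f x| ≤ L * |y - x| := by
    intro z hz
    have h1 : |deriv f z - deriv f x| ≤ L * |z - x| := mvt_abs _ hdf1 hs hL hx (hsub hz)
    have h2 : |z - x| ≤ |y - x| := Set.abs_sub_left_of_mem_uIcc hz
    nlinarith [abs_nonneg (z - x)]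
  have := taylor_abs f hf1 (convex_uIcc x y) Set.left_mem_uIcc Set.right_mem_uIcc
    (deriv f x) key
  calc |f y - f x - deriv f x * (y - x)| ≤ L * |y - x| * |y - x| := this
    _ = L * (y - x) ^ 2 := by rw [mul_assoc, ← abs_mul, abs_mul_self]; ring

set_option maxHeartbeats 1000000 in
theorem stmt_5 (J : ℝ → ℝ) (hJ : ContDiff ℝ 2 J) (x₀ : ℝ)
    (f₁ f₂ : ℝ → ℝ) (hf₁ : ∀ x, f₁ x = Real.sin (J x)) (hf₂ : ∀ x, f₂ x = Real.cos (J x)) :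
    ∃ K h' : ℝ, 0 < K ∧ 0 < h' ∧ ∀ h : ℝ, 0 < h → h < h' →
      let s := Real.sqrt h
      let x₁ := x₀ + s * f₁ x₀
      let x₂ := x₁ + s * f₂ x₁
      let x₃ := x₂ - s * f₁ x₂
      let x₄ := x₃ - s * f₂ x₃
      |x₄ - (x₀ - h * deriv J x₀)| ≤ K * h ^ ((3:ℝ)/2) := by
  have hf₁e : f₁ = fun x => Real.sin (J x) := funext hf₁
  have hf₂e : f₂ = fun x => Real.cos (J x) := funext hf₂
  have hc₁ : ContDiff ℝ 2 f₁ := by rw [hf₁e]; exact Real.contDiff_sin.comp hJ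
  have hc₂ : ContDiff ℝ 2 f₂ := by rw [hf₂e]; exact Real.contDiff_cos.comp hJ
  have hd₁ : Differentiable ℝ f₁ := hc₁.differentiable (by norm_num)
  have hd₂ : Differentiable ℝ f₂ := hc₂.differentiable (by norm_num)
  have hc₁' : ContDiff ℝ (1+1) f₁ := by norm_num; exact hc₁
  have hc₂' : ContDiff ℝ (1+1) f₂ := by norm_num; exact hc₂
  have hdd₁ : ContDiff ℝ 1 (deriv f₁) := (contDiff_succ_iff_deriv.mp hc₁').2.2
  have hdd₂ : ContDiff ℝ 1 (deriv f₂) := (contDiff_succ_iff_deriv.mp hc₂').2.2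
  have hcont₁ : Continuous (deriv (deriv f₁)) := (contDiff_one_iff_deriv.mp hdd₁).2
  have hcont₂ : Continuous (deriv (deriv f₂)) := (contDiff_one_iff_deriv.mp hdd₂).2
  set S : Set ℝ := Set.Icc (x₀ - 4) (x₀ + 4) with hS
  have hconv : Convex ℝ S := convex_Icc _ _
  obtain ⟨M₁, hM₁⟩ := isCompact_Icc.exists_bound_of_continuousOn
    (hdd₁.continuous.continuousOn (s := S))
  obtain ⟨M₂, hM₂⟩ := isCompact_Icc.exists_bound_of_continuousOn
    (hdd₂.continuous.continuousOn (s := S))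
  obtain ⟨L₁, hL₁⟩ := isCompact_Icc.exists_bound_of_continuousOn
    (hcont₁.continuousOn (s := S))
  obtain ⟨L₂, hL₂⟩ := isCompact_Icc.exists_bound_of_continuousOn
    (hcont₂.continuousOn (s := S))
  set M := max M₁ M₂ with hMdef
  set L := max L₁ L₂ with hLdef
  have memS : ∀ y : ℝ, |y - x₀| ≤ 3 → y ∈ S := by
    intro y hy
    have := abs_le.mp hy
    exact Set.mem_Icc.mpr ⟨by linarith [this.1], by linarith [this.2]⟩
  have mem0 : x₀ ∈ S := memS x₀ (by simp)
  have hM : ∀ z ∈ S, |deriv f₁ z| ≤ M ∧ |deriv f₂ z| ≤ M := fun z hz =>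
    ⟨le_trans (by simpa [Real.norm_eq_abs] using hM₁ z hz) (le_max_left _ _),
     le_trans (by simpa [Real.norm_eq_abs] using hM₂ z hz) (le_max_right _ _)⟩
  have hL : ∀ z ∈ S, |deriv (deriv f₁) z| ≤ L ∧ |deriv (deriv f₂) z| ≤ L := fun z hz =>
    ⟨le_trans (by simpa [Real.norm_eq_abs] using hL₁ z hz) (le_max_left _ _),
     le_trans (by simpa [Real.norm_eq_abs] using hL₂ z hz) (le_max_right _ _)⟩
  have M0 : 0 ≤ M := le_trans (abs_nonneg _) (hM x₀ mem0).1
  have L0 : 0 ≤ L := le_trans (abs_nonneg _) (hL x₀ mem0).1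
  have hb₁ : ∀ x, |f₁ x| ≤ 1 := fun x => by
    rw [hf₁]; exact abs_le.mpr ⟨Real.neg_one_le_sin _, Real.sin_le_one _⟩
  have hb₂ : ∀ x, |f₂ x| ≤ 1 := fun x => by
    rw [hf₂]; exact abs_le.mpr ⟨Real.neg_one_le_cos _, Real.cos_le_one _⟩
  refine ⟨14 * L + 4 * M ^ 2 + 1, 1, by positivity, one_pos, ?_⟩
  intro h hh0 hh1
  intro s x₁ x₂ x₃ x₄
  have hs : s = Real.sqrt h := rfl
  have hx₁ : x₁ = x₀ + s * f₁ x₀ := rfl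
  have hx₂ : x₂ = x₁ + s * f₂ x₁ := rfl
  have hx₃ : x₃ = x₂ - s * f₁ x₂ := rfl
  have hx₄ : x₄ = x₃ - s * f₂ x₃ := rfl
  clear_value s x₁ x₂ x₃ x₄
  have hs0 : 0 < s := hs ▸ Real.sqrt_pos.mpr hh0
  have hs1 : s ≤ 1 := by
    rw [hs]
    have := Real.sqrt_le_sqrt hh1.le
    simpa [Real.sqrt_one] using this
  have hs2 : s ^ 2 = h := by rw [hs]; exact Real.sq_sqrt hh0.le
  -- distances
  have d1 : |x₁ - x₀| ≤ s := by
    have : x₁ - x₀ = s * f₁ x₀ := by rw [hx₁]; ring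
    rw [this, abs_mul, abs_of_pos hs0]
    nlinarith [hb₁ x₀, abs_nonneg (f₁ x₀)]
  have d2 : |x₂ - x₀| ≤ 2 * s := by
    have e : x₂ - x₀ = s * f₁ x₀ + s * f₂ x₁ := by rw [hx₂, hx₁]; ring
    rw [e]
    have t := abs_add_le (s * f₁ x₀) (s * f₂ x₁)
    rw [abs_mul, abs_mul, abs_of_pos hs0] at t
    nlinarith [hb₁ x₀, hb₂ x₁, abs_nonneg (f₁ x₀), abs_nonneg (f₂ x₁)]
  have d3 : |x₃ - x₀| ≤ 3 * s := by
    have e : x₃ - x₀ = (s * f₁ x₀ + s * f₂ x₁) + -(s * f₁ x₂) := by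
      rw [hx₃, hx₂, hx₁]; ring
    rw [e]
    have t := abs_add_le (s * f₁ x₀ + s * f₂ x₁) (-(s * f₁ x₂))
    have t2 := abs_add_le (s * f₁ x₀) (s * f₂ x₁)
    rw [abs_neg] at t
    rw [abs_mul, abs_mul, abs_of_pos hs0] at t2
    have t3 : |s * f₁ x₂| = s * |f₁ x₂| := by rw [abs_mul, abs_of_pos hs0]
    nlinarith [hb₁ x₀, hb₂ x₁, hb₁ x₂, abs_nonneg (f₁ x₀), abs_nonneg (f₂ x₁),
      abs_nonneg (f₁ x₂)]
  have mem1 : x₁ ∈ S := memS x₁ (by linarith)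
  have mem2 : x₂ ∈ S := memS x₂ (by linarith)
  have mem3 : x₃ ∈ S := memS x₃ (by linarith)
  -- Taylor error bounds
  have E₁ := taylor2 f₂ hc₂ hconv (fun z hz => (hL z hz).2) mem0 mem1
  have E₂ := taylor2 f₁ hc₁ hconv (fun z hz => (hL z hz).1) mem0 mem2
  have E₃ := taylor2 f₂ hc₂ hconv (fun z hz => (hL z hz).2) mem0 mem3
  have B1 : |f₂ x₁ - f₂ x₀ - deriv f₂ x₀ * (x₁ - x₀)| ≤ L * s ^ 2 := by
    refine le_trans E₁ (mul_le_mul_of_nonneg_left ?_ L0)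
    nlinarith [d1, abs_nonneg (x₁ - x₀), sq_abs (x₁ - x₀)]
  have B2 : |f₁ x₂ - f₁ x₀ - deriv f₁ x₀ * (x₂ - x₀)| ≤ 4 * L * s ^ 2 := by
    refine le_trans E₂ ?_
    have t : (x₂ - x₀) ^ 2 ≤ 4 * s ^ 2 := by
      nlinarith [d2, abs_nonneg (x₂ - x₀), sq_abs (x₂ - x₀)]
    calc L * (x₂ - x₀) ^ 2 ≤ L * (4 * s ^ 2) := mul_le_mul_of_nonneg_left t L0
      _ = 4 * L * s ^ 2 := by ring
  have B3 : |f₂ x₃ - f₂ x₀ - deriv f₂ x₀ * (x₃ - x₀)| ≤ 9 * L * s ^ 2 := by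
    refine le_trans E₃ ?_
    have t : (x₃ - x₀) ^ 2 ≤ 9 * s ^ 2 := by
      nlinarith [d3, abs_nonneg (x₃ - x₀), sq_abs (x₃ - x₀)]
    calc L * (x₃ - x₀) ^ 2 ≤ L * (9 * s ^ 2) := mul_le_mul_of_nonneg_left t L0
      _ = 9 * L * s ^ 2 := by ring
  -- Lipschitz bounds
  have B4 : |f₂ x₁ - f₂ x₀| ≤ M * s := by
    have t := mvt_abs f₂ hd₂ hconv (fun z hz => (hM z hz).2) mem0 mem1
    exact le_trans t (mul_le_mul_of_nonneg_left d1 M0)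
  have B5 : |f₁ x₂ - f₁ x₀| ≤ 2 * M * s := by
    have t := mvt_abs f₁ hd₁ hconv (fun z hz => (hM z hz).1) mem0 mem2
    exact le_trans t ((mul_le_mul_of_nonneg_left d2 M0).trans_eq (by ring))
  have BA : |deriv f₁ x₀| ≤ M := (hM x₀ mem0).1
  have BB : |deriv f₂ x₀| ≤ M := (hM x₀ mem0).2
  -- derivative formulas
  have hJd : Differentiable ℝ J := hJ.differentiable (by norm_num)
  have hA : deriv f₁ x₀ = Real.cos (J x₀) * deriv J x₀ := by
    rw [hf₁e]
    have := ((Real.hasDerivAt_sin (J x₀)).comp x₀ (hJd x₀).hasDerivAt).deriv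
    exact this
  have hB : deriv f₂ x₀ = -Real.sin (J x₀) * deriv J x₀ := by
    rw [hf₂e]
    have := ((Real.hasDerivAt_cos (J x₀)).comp x₀ (hJd x₀).hasDerivAt).deriv
    exact this
  have hid : deriv f₂ x₀ * f₁ x₀ - deriv f₁ x₀ * (f₁ x₀ + f₂ x₀) - deriv f₂ x₀ * f₂ x₀
      = -deriv J x₀ := by
    rw [hA, hB, hf₁, hf₂]
    linear_combination (-(deriv J x₀)) * Real.sin_sq_add_cos_sq (J x₀)
  -- key algebraic identity
  have keyeq : x₄ - (x₀ - h * deriv J x₀) =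
      s * ((f₂ x₁ - f₂ x₀ - deriv f₂ x₀ * (x₁ - x₀))
        - (f₁ x₂ - f₁ x₀ - deriv f₁ x₀ * (x₂ - x₀))
        - (f₂ x₃ - f₂ x₀ - deriv f₂ x₀ * (x₃ - x₀)))
      + s ^ 2 * (deriv f₂ x₀ * (f₁ x₂ - f₁ x₀)
        - (deriv f₁ x₀ + deriv f₂ x₀) * (f₂ x₁ - f₂ x₀)) := by
    have e4 : x₄ = x₀ + s * f₁ x₀ + s * f₂ x₁ - s * f₁ x₂ - s * f₂ x₃ := by
      rw [hx₄, hx₃, hx₂, hx₁]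
    rw [e4, hx₃, hx₂, hx₁]
    linear_combination s ^ 2 * hid - deriv J x₀ * hs2
  -- assemble
  have hE : |(f₂ x₁ - f₂ x₀ - deriv f₂ x₀ * (x₁ - x₀))
        - (f₁ x₂ - f₁ x₀ - deriv f₁ x₀ * (x₂ - x₀))
        - (f₂ x₃ - f₂ x₀ - deriv f₂ x₀ * (x₃ - x₀))| ≤ 14 * L * s ^ 2 := by
    set e₁ := f₂ x₁ - f₂ x₀ - deriv f₂ x₀ * (x₁ - x₀)
    set e₂ := f₁ x₂ - f₁ x₀ - deriv f₁ x₀ * (x₂ - x₀)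
    set e₃ := f₂ x₃ - f₂ x₀ - deriv f₂ x₀ * (x₃ - x₀)
    have t : e₁ - e₂ - e₃ = e₁ + -e₂ + -e₃ := by ring
    rw [t]
    have u1 := abs_add_le (e₁ + -e₂) (-e₃)
    have u2 := abs_add_le e₁ (-e₂)
    rw [abs_neg] at u1 u2
    linarith
  have hF : |deriv f₂ x₀ * (f₁ x₂ - f₁ x₀)
        - (deriv f₁ x₀ + deriv f₂ x₀) * (f₂ x₁ - f₂ x₀)| ≤ 4 * M ^ 2 * s := by
    have u1 : |deriv f₂ x₀ * (f₁ x₂ - f₁ x₀)| ≤ M * (2 * M * s) := by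
      rw [abs_mul]; exact mul_le_mul BB B5 (abs_nonneg _) M0
    have u2 : |(deriv f₁ x₀ + deriv f₂ x₀) * (f₂ x₁ - f₂ x₀)| ≤ (M + M) * (M * s) := by
      rw [abs_mul]
      exact mul_le_mul (le_trans (abs_add_le _ _) (add_le_add BA BB)) B4 (abs_nonneg _)
        (by linarith)
    have t : deriv f₂ x₀ * (f₁ x₂ - f₁ x₀)
        - (deriv f₁ x₀ + deriv f₂ x₀) * (f₂ x₁ - f₂ x₀)
        = deriv f₂ x₀ * (f₁ x₂ - f₁ x₀)
        + -((deriv f₁ x₀ + deriv f₂ x₀) * (f₂ x₁ - f₂ x₀)) := by ring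
    rw [t]
    have u3 := abs_add_le (deriv f₂ x₀ * (f₁ x₂ - f₁ x₀))
      (-((deriv f₁ x₀ + deriv f₂ x₀) * (f₂ x₁ - f₂ x₀)))
    rw [abs_neg] at u3
    nlinarith
  have hs3 : s ^ 3 = h ^ ((3:ℝ)/2) := by
    rw [hs, Real.sqrt_eq_rpow, ← Real.rpow_natCast (h ^ ((1:ℝ)/2)) 3,
      ← Real.rpow_mul hh0.le]
    norm_num
  calc |x₄ - (x₀ - h * deriv J x₀)|
      ≤ s * (14 * L * s ^ 2) + s ^ 2 * (4 * M ^ 2 * s) := by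
        rw [keyeq]
        refine le_trans (abs_add_le _ _) ?_
        rw [abs_mul, abs_mul, abs_of_pos hs0, abs_of_pos (pow_pos hs0 2)]
        exact add_le_add (mul_le_mul_of_nonneg_left hE hs0.le)
          (mul_le_mul_of_nonneg_left hF (pow_pos hs0 2).le)
    _ = (14 * L + 4 * M ^ 2) * s ^ 3 := by ring
    _ ≤ (14 * L + 4 * M ^ 2 + 1) * h ^ ((3:ℝ)/2) := by
        rw [← hs3]
        nlinarith [pow_pos hs0 3]
end
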